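/- Let p, q ∈ (0, ∞] with p < q, p < ∞ and 1 ≤ q. Then the set of elements f of the Banach space ℓ^q whose underlying sequence belongs to ℓ^p is an F_σ meager subset of ℓ^q; that is, it is equal to the union of a countable family of subsets of ℓ^q, each of which is closed in ℓ^q and has empty interior in ℓ^q. -/

import Mathlib

open scoped ENNReal

/-- For any complex number `z` there is a unit vector `u` such that adding `δ • u`
increases the norm exactly by `δ`. -/
lemma exists_align (z : ℂ) : ∃ u : ℂ, ‖u‖ = 1 ∧ ∀ δ : ℝ, 0 ≤ δ → ‖z + δ • u‖ = ‖z‖ + δ := by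
  rcases eq_or_ne z 0 with rfl | hz
  · exact ⟨1, norm_one, fun δ hδ => by simp [norm_smul, abs_of_nonneg hδ]⟩
  · have hz' : (0:ℝ) < ‖z‖ := norm_pos_iff.2 hz
    refine ⟨‖z‖⁻¹ • z, ?_, ?_⟩
    · rw [norm_smul, norm_inv, norm_norm, inv_mul_cancel₀ hz'.ne']
    · intro δ hδ
      have h1 : z + δ • (‖z‖⁻¹ • z) = ((1 + δ * ‖z‖⁻¹ : ℝ)) • z := by
        rw [smul_smul, add_smul, one_smul]
      have h2 : (0:ℝ) ≤ 1 + δ * ‖z‖⁻¹ :=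
        add_nonneg zero_le_one (mul_nonneg hδ (inv_nonneg.2 (norm_nonneg z)))
      rw [h1, norm_smul, Real.norm_eq_abs, abs_of_nonneg h2, add_mul, one_mul,
        mul_assoc, inv_mul_cancel₀ hz'.ne', mul_one]

/-- Let `p, q ∈ (0, ∞]` with `p < q`, `p < ∞` and `1 ≤ q`. The set of
elements of the Banach space `ℓ^q` whose underlying sequence belongs to `ℓ^p` is an
`F_σ` meager subset of `ℓ^q`: it is the union of a countable family of subsets of `ℓ^q`,
each closed with empty interior in `ℓ^q`. -/
theorem ellP_in_ellQ_Fsigma_meager (p : ℝ) (q : ℝ≥0∞) [Fact (1 ≤ q)]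
    (hp : 0 < p) (hpq : ENNReal.ofReal p < q) :
    ∃ S : ℕ → Set (lp (fun _ : ℕ => ℂ) q),
      (∀ n, IsClosed (S n) ∧ interior (S n) = ∅) ∧
      {f : lp (fun _ : ℕ => ℂ) q | Summable fun n : ℕ => ‖(f : ∀ _ : ℕ, ℂ) n‖ ^ p}
        = ⋃ n, S n := by
  classical
  have hq1 : (1 : ℝ≥0∞) ≤ q := Fact.out
  have hqne : q ≠ 0 := (zero_lt_one.trans_le hq1).ne'
  -- the candidate closed sets
  set S : ℕ → Set (lp (fun _ : ℕ => ℂ) q) :=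
    fun m => {f | ∀ F : Finset ℕ, ∑ n ∈ F, ‖(f : ∀ _ : ℕ, ℂ) n‖ ^ p ≤ (m : ℝ)} with hS
  -- evaluation maps are continuous
  have heval : ∀ i : ℕ, Continuous fun f : lp (fun _ : ℕ => ℂ) q => (f : ∀ _ : ℕ, ℂ) i := by
    intro i
    refine (LipschitzWith.of_dist_le_mul (K := 1) fun f g => ?_).continuous
    have := lp.norm_apply_le_norm hqne (f - g) i
    simpa [dist_eq_norm] using this
  have hcont : ∀ F : Finset ℕ,
      Continuous fun f : lp (fun _ : ℕ => ℂ) q => ∑ n ∈ F, ‖(f : ∀ _ : ℕ, ℂ) n‖ ^ p := by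
    intro F
    exact continuous_finset_sum _ fun i _ =>
      ((heval i).norm.rpow_const fun f => Or.inr hp.le)
  refine ⟨S, fun m => ⟨?_, ?_⟩, ?_⟩
  · -- closedness
    have : S m = ⋂ F : Finset ℕ,
        {f : lp (fun _ : ℕ => ℂ) q | ∑ n ∈ F, ‖(f : ∀ _ : ℕ, ℂ) n‖ ^ p ≤ (m : ℝ)} := by
      ext f; simp [hS, Set.mem_iInter]
    rw [this]
    exact isClosed_iInter fun F => isClosed_le (hcont F) continuous_const
  · -- empty interior
    rw [Set.eq_empty_iff_forall_notMem]
    intro x hx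
    obtain ⟨ε, hε, hball⟩ := Metric.mem_nhds_iff.1 (mem_interior_iff_mem_nhds.1 hx)
    -- choose aligned unit directions
    choose u hu1 hu2 using fun n : ℕ => exists_align ((x : ∀ _ : ℕ, ℂ) n)
    -- the main estimate : any admissible perturbation keeps partial sums below m
    have main : ∀ δ : ℝ, 0 ≤ δ → ∀ N : ℕ,
        ‖∑ n ∈ Finset.range N, lp.single q n (δ • u n)‖ < ε →
        (N : ℝ) * δ ^ p ≤ (m : ℝ) := by
      intro δ hδ N hnorm
      set h : lp (fun _ : ℕ => ℂ) q := ∑ n ∈ Finset.range N, lp.single q n (δ • u n) with hh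
      have hcoord : ∀ n < N, (h : ∀ _ : ℕ, ℂ) n = δ • u n := by
        intro n hn
        rw [hh, lp.coeFn_sum]
        simp only [Finset.sum_apply, lp.single_apply, Finset.sum_dite_eq]
        simp [Finset.mem_range.2 hn]
      have hg : x + h ∈ S m := by
        apply hball
        simp only [Metric.mem_ball, dist_eq_norm, add_sub_cancel_left]
        exact hnorm
      have hsum := hg (Finset.range N)
      have hptwise : ∀ n ∈ Finset.range N,
          δ ^ p ≤ ‖((x + h : lp (fun _ : ℕ => ℂ) q) : ∀ _ : ℕ, ℂ) n‖ ^ p := by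
        intro n hn
        have hn' := Finset.mem_range.1 hn
        have : ((x + h : lp (fun _ : ℕ => ℂ) q) : ∀ _ : ℕ, ℂ) n = (x : ∀ _ : ℕ, ℂ) n + δ • u n := by
          simp [hcoord n hn']
        rw [this, hu2 n δ hδ]
        exact Real.rpow_le_rpow hδ (le_add_of_nonneg_left (norm_nonneg _)) hp.le
      calc (N : ℝ) * δ ^ p = ∑ _n ∈ Finset.range N, δ ^ p := by
            simp [mul_comm]
        _ ≤ ∑ n ∈ Finset.range N, ‖((x + h : lp (fun _ : ℕ => ℂ) q) : ∀ _ : ℕ, ℂ) n‖ ^ p :=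
            Finset.sum_le_sum hptwise
        _ ≤ (m : ℝ) := hsum
    -- now split on whether q is finite
    rcases eq_or_ne q ∞ with hq | hq
    · -- q = ∞ : take δ = ε/2 and N large
      set δ : ℝ := ε / 2 with hδdef
      have hδ : 0 < δ := by positivity
      obtain ⟨N, hN⟩ := exists_nat_gt ((m : ℝ) / δ ^ p)
      have hδp : (0:ℝ) < δ ^ p := Real.rpow_pos_of_pos hδ p
      have hmlt : (m : ℝ) < (N : ℝ) * δ ^ p := by
        rw [div_lt_iff₀ hδp] at hN; exact hN
      have hnorm : ‖∑ n ∈ Finset.range N, lp.single q n (δ • u n)‖ < ε := by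
        have hle : ‖∑ n ∈ Finset.range N, lp.single q n (δ • u n)‖ ≤ δ := by
          subst hq
          apply lp.norm_le_of_forall_le hδ.le
          intro i
          rw [lp.coeFn_sum]
          simp only [Finset.sum_apply, lp.single_apply, Finset.sum_dite_eq]
          by_cases hi : i ∈ Finset.range N
          · simp [hi, norm_smul, abs_of_nonneg hδ.le, hu1 i]
          · simp [hi, hδ.le]
        calc ‖∑ n ∈ Finset.range N, lp.single q n (δ • u n)‖ ≤ δ := hle
          _ < ε := by rw [hδdef]; linarith
      exact absurd (main δ hδ.le N hnorm) (not_le.2 hmlt)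
    · -- q < ∞
      have hqr : 0 < q.toReal := ENNReal.toReal_pos hqne hq
      set qr := q.toReal with hqrdef
      have hpqr : p < qr := (ENNReal.ofReal_lt_iff_lt_toReal hp.le hq).1 hpq
      set a : ℝ := 1 - p / qr with ha
      have ha0 : 0 < a := by
        have : p / qr < 1 := (div_lt_one hqr).2 hpqr
        simp only [ha]; linarith
      set c : ℝ := (m : ℝ) * (2 / ε) ^ p with hc
      have hc0 : 0 ≤ c := mul_nonneg (Nat.cast_nonneg m) (Real.rpow_nonneg (by positivity) p)
      obtain ⟨N, hN⟩ := exists_nat_gt (max 1 (c ^ a⁻¹))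
      set R : ℝ := (N : ℝ) with hR
      have hR1 : 1 < R := lt_of_le_of_lt (le_max_left _ _) hN
      have hR0 : 0 < R := zero_lt_one.trans hR1
      have hRa : c < R ^ a := by
        have h1 : c ^ a⁻¹ < R := lt_of_le_of_lt (le_max_right _ _) hN
        have := Real.rpow_lt_rpow (Real.rpow_nonneg hc0 a⁻¹) h1 ha0
        rwa [Real.rpow_inv_rpow hc0 ha0.ne'] at this
      set δ : ℝ := ε / 2 * R ^ (-(1 / qr)) with hδdef
      have hδ : 0 < δ := by
        have := Real.rpow_pos_of_pos hR0 (-(1/qr))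
        positivity
      -- the key algebraic identity
      have calcA : ∀ r : ℝ, R * δ ^ r = (ε / 2) ^ r * R ^ (1 - r / qr) := by
        intro r
        rw [hδdef, Real.mul_rpow (by positivity) (Real.rpow_nonneg hR0.le _),
          ← Real.rpow_mul hR0.le,
          (by ring : (1:ℝ) - r / qr = 1 + -(1 / qr) * r),
          Real.rpow_add hR0, Real.rpow_one]
        ring
      have hnorm : ‖∑ n ∈ Finset.range N, lp.single q n (δ • u n)‖ < ε := by
        set h : lp (fun _ : ℕ => ℂ) q := ∑ n ∈ Finset.range N, lp.single q n (δ • u n) with hh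
        have hns := lp.norm_sum_single hqr (fun n => δ • u n) (Finset.range N)
        have hval : ∀ n : ℕ, ‖δ • u n‖ ^ qr = δ ^ qr := by
          intro n
          rw [norm_smul, hu1 n, mul_one, Real.norm_eq_abs, abs_of_nonneg hδ.le]
        have hnq : ‖h‖ ^ qr = (ε / 2) ^ qr := by
          rw [hh, hns, ← hqrdef]
          simp only [hval]
          rw [Finset.sum_const, Finset.card_range, nsmul_eq_mul, ← hR]
          have := calcA qr
          rw [this, div_self hqr.ne', sub_self, Real.rpow_zero, mul_one]
        by_contra hcon
        push_neg at hcon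
        have h1 : ε ^ qr ≤ ‖h‖ ^ qr := Real.rpow_le_rpow hε.le hcon hqr.le
        rw [hnq] at h1
        have h2 : (ε / 2) ^ qr < ε ^ qr :=
          Real.rpow_lt_rpow (by positivity) (by linarith) hqr
        linarith
      have hfinal := main δ hδ.le N hnorm
      rw [← hR, calcA p, ← ha] at hfinal
      have hgt : (m : ℝ) < (ε / 2) ^ p * R ^ a := by
        have h1 : (ε / 2) ^ p * c < (ε / 2) ^ p * R ^ a :=
          mul_lt_mul_of_pos_left hRa (Real.rpow_pos_of_pos (by positivity) p)
        have h2 : (ε / 2) ^ p * c = (m : ℝ) := by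
          rw [hc, mul_left_comm, ← Real.mul_rpow (by positivity) (by positivity)]
          have hone : ε / 2 * (2 / ε) = 1 := by field_simp
          rw [hone, Real.one_rpow, mul_one]
        linarith
      linarith
  · -- the union is the set of ℓ^p sequences
    ext f
    simp only [Set.mem_setOf_eq, Set.mem_iUnion, hS]
    constructor
    · intro hf
      refine ⟨⌈∑' n : ℕ, ‖(f : ∀ _ : ℕ, ℂ) n‖ ^ p⌉₊, fun F => ?_⟩
      calc ∑ n ∈ F, ‖(f : ∀ _ : ℕ, ℂ) n‖ ^ p
          ≤ ∑' n : ℕ, ‖(f : ∀ _ : ℕ, ℂ) n‖ ^ p :=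
            Summable.sum_le_tsum F (fun i _ => Real.rpow_nonneg (norm_nonneg _) p) hf
        _ ≤ _ := Nat.le_ceil _
    · rintro ⟨m, hm⟩
      exact summable_of_sum_le (fun n => Real.rpow_nonneg (norm_nonneg _) p) hm
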